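/- Let K be a flag simplicial complex on [m] and let i, j ∈ [m] with i ≠ j and {i,j} ∉ K. Then the element ⁅μ_i, ⁅μ_i, μ_j⁆⁆ of L_K does not belong to the Lie subalgebra N_K. In particular, since ⁅μ_i, ⁅μ_i, μ_j⁆⁆ lies in the commutator subalgebra L'_K = [L_K, L_K] and N_K ⊆ L'_K, the inclusion N_K ⊆ L'_K is strict whenever K is not a full simplex on [m]. -/

import Mathlib

/-- `K` is a simplicial complex on the vertex set `Fin m`. -/
def IsSimplicialComplex {m : ℕ} (K : Finset (Finset (Fin m))) : Prop :=
  (∀ I ∈ K, ∀ I' ⊆ I, I' ∈ K) ∧ ∅ ∈ K ∧ ∀ i : Fin m, ({i} : Finset (Fin m)) ∈ K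

/-- `K` is flag: every set of vertices pairwise joined by `2`-element simplices
of `K` is itself a simplex of `K`. -/
def IsFlag {m : ℕ} (K : Finset (Finset (Fin m))) : Prop :=
  ∀ S : Finset (Fin m),
    (∀ i ∈ S, ∀ j ∈ S, i ≠ j → ({i, j} : Finset (Fin m)) ∈ K) → S ∈ K

/-- `a` and `b` lie in the same connected component of the graph of the full
subcomplex `K_J`. -/
def connKJ {m : ℕ} (K : Finset (Finset (Fin m))) (J : Finset (Fin m)) :
    Fin m → Fin m → Prop :=
  Relation.ReflTransGen
    (fun a b => a ∈ J ∧ b ∈ J ∧ a ≠ b ∧ ({a, b} : Finset (Fin m)) ∈ K)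

/-- `Θ_K(J)`: the set of vertices `j ∈ J` that are smallest in their connected
component of the graph of `K_J`, this component not containing `max J`. -/
def Theta {m : ℕ} (K : Finset (Finset (Fin m))) (J : Finset (Fin m)) (j : Fin m) : Prop :=
  ∃ hj : j ∈ J, (∀ i ∈ J, connKJ K J j i → j ≤ i) ∧
    ¬ connKJ K J j (J.max' ⟨j, hj⟩)

/-- The Lie ideal of relations defining the graph Lie algebra `L_K` over `ℤ/2`. -/
noncomputable def LKrels {m : ℕ} (K : Finset (Finset (Fin m))) :
    LieIdeal (ZMod 2) (FreeLieAlgebra (ZMod 2) (Fin m)) :=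
  LieSubmodule.lieSpan (ZMod 2) (FreeLieAlgebra (ZMod 2) (Fin m))
    {z | ∃ i j : Fin m, ({i, j} : Finset (Fin m)) ∈ K ∧
      z = ⁅FreeLieAlgebra.of (ZMod 2) i, FreeLieAlgebra.of (ZMod 2) j⁆}

/-- The graph Lie algebra `L_K` over `ℤ/2`. -/
abbrev LK {m : ℕ} (K : Finset (Finset (Fin m))) :=
  FreeLieAlgebra (ZMod 2) (Fin m) ⧸ LKrels K

/-- The generators `μ₁, …, μ_m` of `L_K`. -/
noncomputable def mu {m : ℕ} (K : Finset (Finset (Fin m))) (i : Fin m) : LK K :=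
  LieSubmodule.Quotient.mk (N := LKrels K) (FreeLieAlgebra.of (ZMod 2) i)

/-- For `q : Fin m → L` and `I = {t₁ < … < t_s} ⊆ [m]`, the nested commutator
`c_q(I, x) = ⁅q t₁, ⁅q t₂, … ⁅q t_s, x⁆…⁆⁆`, with `c_q(∅, x) = x`. -/
def cNest {L : Type*} [LieRing L] {m : ℕ} (q : Fin m → L) (I : Finset (Fin m)) (x : L) : L :=
  (I.sort (· ≤ ·)).foldr (fun t acc => ⁅q t, acc⁆) x

/-- The set of GPTW generators of `L_K`. -/
def GPTWset {m : ℕ} (K : Finset (Finset (Fin m))) : Set (LK K) :=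
  {z | ∃ (J : Finset (Fin m)) (j : Fin m),
    Theta K J j ∧ z = cNest (mu K) (J.erase j) (mu K j)}

/-- `N_K`, the Lie subalgebra of `L_K` generated by the GPTW generators. -/
noncomputable def NK {m : ℕ} (K : Finset (Finset (Fin m))) : LieSubalgebra (ZMod 2) (LK K) :=
  LieSubalgebra.lieSpan (ZMod 2) (LK K) (GPTWset K)

/-- The commutator (derived) ideal `L'_K = [L_K, L_K]`. -/
noncomputable def LKderived {m : ℕ} (K : Finset (Finset (Fin m))) :
    LieIdeal (ZMod 2) (LK K) :=
  ⁅(⊤ : LieIdeal (ZMod 2) (LK K)), (⊤ : LieIdeal (ZMod 2) (LK K))⁆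


attribute [local instance] LieRing.ofAssociativeRing

section MatrixModel

/-- Ambient `4 × 4` matrix Lie algebra over `ℤ/2` used to detect the element. -/
abbrev H4 : Type := Matrix (Fin 4) (Fin 4) (ZMod 2)

def xM : H4 := Matrix.single 0 1 1 + Matrix.single 1 2 1
def yM : H4 := Matrix.single 2 3 1
def cM : H4 := Matrix.single 1 3 1
def dM : H4 := Matrix.single 0 3 1

lemma lie_xy : ⁅xM, yM⁆ = cM := by decide
lemma lie_yx : ⁅yM, xM⁆ = cM := by decide
lemma lie_xc : ⁅xM, cM⁆ = dM := by decide
lemma dM_not_mem : dM ∉ Submodule.span (ZMod 2) {cM} := by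
  rw [Submodule.mem_span_singleton]
  rintro ⟨a, ha⟩
  exact (by decide : ∀ a : ZMod 2, a • cM ≠ dM) a ha

/-- The span of `cM` is a Lie subalgebra of `H4`. -/
def SC : LieSubalgebra (ZMod 2) H4 :=
  { Submodule.span (ZMod 2) {cM} with
    lie_mem' := by
      intro a b ha hb
      obtain ⟨s, rfl⟩ := Submodule.mem_span_singleton.mp ha
      obtain ⟨t, rfl⟩ := Submodule.mem_span_singleton.mp hb
      show ⁅s • cM, t • cM⁆ ∈ Submodule.span (ZMod 2) {cM}
      rw [(by decide : ∀ s t : ZMod 2, ⁅s • cM, t • cM⁆ = (0 : H4)) s t]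
      exact Submodule.zero_mem _ }

lemma mem_SC_iff (w : H4) : w ∈ SC ↔ w ∈ Submodule.span (ZMod 2) {cM} := Iff.rfl

lemma cM_mem_SC : cM ∈ SC := Submodule.subset_span rfl

end MatrixModel

section CNestLemmas

variable {L : Type*} [LieRing L] {m : ℕ}

lemma cNest_hom {R : Type*} [CommRing R] [LieAlgebra R L] {L' : Type*} [LieRing L']
    [LieAlgebra R L'] (f : L →ₗ⁅R⁆ L') (q : Fin m → L) (I : Finset (Fin m)) (x : L) :
    f (cNest q I x) = cNest (fun t => f (q t)) I (f x) := by
  unfold cNest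
  induction I.sort (· ≤ ·) with
  | nil => rfl
  | cons a l ih => simp only [List.foldr_cons, LieHom.map_lie, ih]

lemma cNest_zero_right (q : Fin m → L) (I : Finset (Fin m)) : cNest q I (0 : L) = 0 := by
  unfold cNest
  induction I.sort (· ≤ ·) with
  | nil => rfl
  | cons a l ih => simp only [List.foldr_cons, ih, lie_zero]

lemma foldr_lie_eq_zero (q : Fin m → L) (x : L) (t : Fin m) (hq : q t = 0) :
    ∀ l : List (Fin m), t ∈ l → l.foldr (fun s acc => ⁅q s, acc⁆) x = 0 := by
  intro l
  induction l with
  | nil => intro h; simp at h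
  | cons a l ih =>
    intro h
    rcases List.mem_cons.mp h with rfl | h
    · simp [hq]
    · simp [ih h]

lemma cNest_eq_zero (q : Fin m → L) (I : Finset (Fin m)) (x : L) (t : Fin m)
    (ht : t ∈ I) (hq : q t = 0) : cNest q I x = 0 :=
  foldr_lie_eq_zero q x t hq _ ((Finset.mem_sort _).mpr ht)

lemma cNest_empty (q : Fin m → L) (x : L) : cNest q (∅ : Finset (Fin m)) x = x := by
  unfold cNest; rw [Finset.sort_empty]; rfl

lemma cNest_singleton (q : Fin m → L) (t : Fin m) (x : L) :
    cNest q ({t} : Finset (Fin m)) x = ⁅q t, x⁆ := by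
  unfold cNest; rw [Finset.sort_singleton]
  simp [List.foldr]

lemma cNest_nonempty (q : Fin m → L) (I : Finset (Fin m)) (x : L) (hI : I.Nonempty) :
    ∃ a z, cNest q I x = ⁅q a, z⁆ := by
  unfold cNest
  rcases h : I.sort (· ≤ ·) with _ | ⟨a, l⟩
  · exfalso
    obtain ⟨t, ht⟩ := hI
    have := (Finset.mem_sort (α := Fin m) (· ≤ ·)).mpr ht
    rw [h] at this
    simp at this
  · exact ⟨a, _, rfl⟩

end CNestLemmas

lemma theta_not_singleton {m : ℕ} (K : Finset (Finset (Fin m))) (t : Fin m) :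
    ¬ Theta K {t} t := by
  rintro ⟨hj, -, hmax⟩
  apply hmax
  have h : Finset.max' ({t} : Finset (Fin m)) ⟨t, hj⟩ = t := Finset.max'_singleton t
  rw [h]
  exact Relation.ReflTransGen.refl

/-- If `j₀ ∈ J` satisfies the `Θ` condition then `J.erase j₀` is nonempty. -/
lemma erase_nonempty_of_theta {m : ℕ} (K : Finset (Finset (Fin m))) (J : Finset (Fin m))
    (j0 : Fin m) (hΘ : Theta K J j0) : (J.erase j0).Nonempty := by
  rw [Finset.nonempty_iff_ne_empty]
  intro h
  rcases (Finset.erase_eq_empty_iff J j0).mp h with rfl | rfl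
  · obtain ⟨hj0, -, -⟩ := hΘ
    exact absurd hj0 (Finset.notMem_empty _)
  · exact theta_not_singleton K j0 hΘ

/-- Let `K` be a flag simplicial complex on `[m]` and
`i ≠ j` with `{i,j} ∉ K`.  Then `⁅μᵢ, ⁅μᵢ, μⱼ⁆⁆ ∉ N_K`, while
`⁅μᵢ, ⁅μᵢ, μⱼ⁆⁆ ∈ L'_K = [L_K, L_K]` and `N_K ⊆ L'_K`; in particular the
inclusion `N_K ⊆ L'_K` is strict whenever `K` is not a full simplex. -/
theorem bracket_not_mem_NK {m : ℕ} (K : Finset (Finset (Fin m)))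
    (hK : IsSimplicialComplex K) (hflag : IsFlag K)
    (i j : Fin m) (hij : i ≠ j) (hnotK : ({i, j} : Finset (Fin m)) ∉ K) :
    ⁅mu K i, ⁅mu K i, mu K j⁆⁆ ∉ NK K ∧
    ⁅mu K i, ⁅mu K i, mu K j⁆⁆ ∈ LKderived K ∧
    ∀ w ∈ NK K, w ∈ LKderived K := by
  classical
  -- the detecting homomorphism
  set ψ : Fin m → H4 := fun k => if k = i then xM else if k = j then yM else 0 with hψdef
  have hψi : ψ i = xM := by simp [hψdef]
  have hψj : ψ j = yM := by simp [hψdef, hij.symm]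
  have hψ0 : ∀ k, k ≠ i → k ≠ j → ψ k = 0 := by intro k h1 h2; simp [hψdef, h1, h2]
  set φ : FreeLieAlgebra (ZMod 2) (Fin m) →ₗ⁅ZMod 2⁆ H4 :=
    FreeLieAlgebra.lift (ZMod 2) ψ with hφdef
  have hφof : ∀ k, φ (FreeLieAlgebra.of (ZMod 2) k) = ψ k := fun k =>
    FreeLieAlgebra.lift_of_apply ψ k
  have hker : LKrels K ≤ φ.ker := by
    apply LieSubmodule.lieSpan_le.mpr
    rintro z ⟨a, b, hab, rfl⟩
    simp only [SetLike.mem_coe, LieHom.mem_ker, LieHom.map_lie, hφof]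
    by_cases hai : a = i
    · by_cases hbj : b = j
      · rw [hai, hbj] at hab; exact absurd hab hnotK
      · by_cases hbi : b = i
        · rw [hai, hbi]; exact lie_self _
        · rw [hψ0 b hbi hbj, lie_zero]
    · by_cases haj : a = j
      · by_cases hbi : b = i
        · exfalso; apply hnotK
          rw [haj, hbi, Finset.pair_comm] at hab; exact hab
        · by_cases hbj : b = j
          · rw [haj, hbj]; exact lie_self _
          · rw [hψ0 b hbi hbj, lie_zero]
      · rw [hψ0 a hai haj, zero_lie]
  have hker' : (LKrels K).toSubmodule ≤ LinearMap.ker (φ : _ →ₗ[ZMod 2] H4) := by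
    intro z hz
    exact LinearMap.mem_ker.mpr (LieHom.mem_ker.mp (hker hz))
  set φbar : LK K →ₗ⁅ZMod 2⁆ H4 :=
    { toLinearMap := Submodule.liftQ (LKrels K).toSubmodule (φ : _ →ₗ[ZMod 2] H4) hker'
      map_lie' := by
        intro a b
        obtain ⟨a, rfl⟩ := LieSubmodule.Quotient.surjective_mk' (LKrels K) a
        obtain ⟨b, rfl⟩ := LieSubmodule.Quotient.surjective_mk' (LKrels K) b
        exact φ.map_lie a b } with hφbardef
  have hμ : ∀ k, φbar (mu K k) = ψ k := fun k => hφof k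
  -- image of every GPTW generator lies in the span of `cM`
  have hgen : ∀ z ∈ GPTWset K, φbar z ∈ SC := by
    rintro z ⟨J, j0, hΘ, rfl⟩
    rw [cNest_hom φbar]
    simp only [hμ]
    by_cases hall : ∀ t ∈ J.erase j0, t = i ∨ t = j
    · by_cases hj0 : j0 = i ∨ j0 = j
      · have hsub : J.erase j0 ⊆ ({i, j} : Finset (Fin m)).erase j0 := by
          intro t ht
          rw [Finset.mem_erase]
          refine ⟨(Finset.mem_erase.mp ht).1, ?_⟩
          rcases hall t ht with rfl | rfl <;> simp
        obtain ⟨t0, ht0i, ht0ne, ht0⟩ :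
            ∃ t0, (t0 = i ∨ t0 = j) ∧ t0 ≠ j0 ∧
              ({i, j} : Finset (Fin m)).erase j0 = {t0} := by
          rcases hj0 with h | h
          · refine ⟨j, Or.inr rfl, by rw [h]; exact hij.symm, ?_⟩
            rw [h]
            ext t; simp only [Finset.mem_erase, Finset.mem_insert, Finset.mem_singleton]
            constructor
            · rintro ⟨h1, h2 | h2⟩
              · exact absurd h2 h1
              · exact h2
            · rintro rfl; exact ⟨hij.symm, Or.inr rfl⟩
          · refine ⟨i, Or.inl rfl, by rw [h]; exact hij, ?_⟩
            rw [h]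
            ext t; simp only [Finset.mem_erase, Finset.mem_insert, Finset.mem_singleton]
            constructor
            · rintro ⟨h1, h2 | h2⟩
              · exact h2
              · exact absurd h2 h1
            · rintro rfl; exact ⟨hij, Or.inl rfl⟩
        rw [ht0] at hsub
        rcases Finset.subset_singleton_iff.mp hsub with hempty | hsingle
        · exfalso
          have hne := erase_nonempty_of_theta K J j0 hΘ
          rw [hempty] at hne
          exact Finset.not_nonempty_empty hne
        · rw [hsingle, cNest_singleton]
          rcases ht0i with rfl | rfl
          · -- t0 = i, so j0 = j
            have hj0j : j0 = j := by
              rcases hj0 with h | h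
              · exact absurd h.symm ht0ne
              · exact h
            rw [hj0j, hψi, hψj, lie_xy]
            exact cM_mem_SC
          · -- t0 = j, so j0 = i
            have hj0i : j0 = i := by
              rcases hj0 with h | h
              · exact h
              · exact absurd h.symm ht0ne
            rw [hj0i, hψj, hψi, lie_yx]
            exact cM_mem_SC
      · push_neg at hj0
        rw [hψ0 j0 hj0.1 hj0.2, cNest_zero_right]
        exact SC.zero_mem
    · push_neg at hall
      obtain ⟨t, ht, hti, htj⟩ := hall
      rw [cNest_eq_zero _ _ _ t ht (hψ0 t hti htj)]
      exact SC.zero_mem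
  have hNK_le : NK K ≤ SC.comap φbar := by
    apply LieSubalgebra.lieSpan_le.mpr
    intro z hz
    exact hgen z hz
  -- value of the element under φbar
  have hval : φbar ⁅mu K i, ⁅mu K i, mu K j⁆⁆ = dM := by
    rw [LieHom.map_lie, LieHom.map_lie, hμ, hμ, hψi, hψj, lie_xy, lie_xc]
  refine ⟨?_, ?_, ?_⟩
  · intro hmem
    have h1 : φbar ⁅mu K i, ⁅mu K i, mu K j⁆⁆ ∈ SC := hNK_le hmem
    rw [hval] at h1
    exact dM_not_mem h1
  · exact LieSubmodule.lie_mem_lie (LieSubmodule.mem_top _) (LieSubmodule.mem_top _)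
  · intro w hw
    have hle : NK K ≤ LieIdeal.toLieSubalgebra (ZMod 2) (LK K) (LKderived K) := by
      apply LieSubalgebra.lieSpan_le.mpr
      rintro z ⟨J, j0, hΘ, rfl⟩
      obtain ⟨a, zz, hz⟩ := cNest_nonempty (mu K) (J.erase j0) (mu K j0)
        (erase_nonempty_of_theta K J j0 hΘ)
      rw [hz]
      exact LieSubmodule.lie_mem_lie (LieSubmodule.mem_top _) (LieSubmodule.mem_top _)
    exact hle hw
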